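/- Suppose f : ℝⁿ × ℝᵐ → ℝ is ℓ-smooth and μ-strongly concave in y with μ > 0, and let P(x) = max_y f(x,y), y*(x) = argmax_y f(x,y). Then P is differentiable with ∇P(x) = ∇ₓf(x, y*(x)), and ∇P is Lipschitz continuous with constant (κ+1)ℓ where κ = ℓ/μ. -/

import Mathlib

open scoped RealInnerProductSpace
open InnerProductSpace

section stmt3aux
set_option linter.unusedSectionVars false

/-- Descent-type lemma: Lipschitz gradient gives a quadratic bound on linearization error. -/
lemma aux_descent {H : Type*} [NormedAddCommGroup H] [InnerProductSpace ℝ H] [CompleteSpace H]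
    {f : H → ℝ} {g : H → H} {L : ℝ} (hL : 0 ≤ L)
    (hg : ∀ z, HasGradientAt f (g z) z)
    (hlip : ∀ z z', ‖g z - g z'‖ ≤ L * ‖z - z'‖) (z z' : H) :
    |f z' - f z - ⟪g z, z' - z⟫| ≤ L * ‖z' - z‖ ^ 2 := by
  set φ : H → ℝ := fun w => f w - ⟪g z, w⟫ with hφ
  have hD : ∀ w, HasFDerivAt φ (toDual ℝ H (g w - g z)) w := by
    intro w
    have h1 : HasFDerivAt f (toDual ℝ H (g w)) w := (hg w).hasFDerivAt
    have h2 : HasFDerivAt (fun w => (⟪g z, w⟫ : ℝ)) (toDual ℝ H (g z)) w :=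
      (toDual ℝ H (g z)).hasFDerivAt
    rw [map_sub]; exact h1.sub h2
  have key : ‖φ z' - φ z‖ ≤ (L * ‖z' - z‖) * ‖z' - z‖ := by
    refine (convex_closedBall z ‖z' - z‖).norm_image_sub_le_of_norm_hasFDerivWithin_le
      (fun w _ => (hD w).hasFDerivWithinAt) (fun w hw => ?_) ?_ ?_
    · rw [LinearIsometryEquiv.norm_map]
      calc ‖g w - g z‖ ≤ L * ‖w - z‖ := hlip w z
        _ ≤ L * ‖z' - z‖ := by
            have := mem_closedBall_iff_norm.1 hw
            nlinarith
    · exact Metric.mem_closedBall_self (norm_nonneg _)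
    · exact mem_closedBall_iff_norm.2 le_rfl
  have : φ z' - φ z = f z' - f z - ⟪g z, z' - z⟫ := by
    simp only [hφ, inner_sub_right]; ring
  rw [this] at key
  calc |f z' - f z - ⟪g z, z' - z⟫| ≤ (L * ‖z' - z‖) * ‖z' - z‖ := key
    _ = L * ‖z' - z‖ ^ 2 := by ring

open Filter in
/-- First-order characterization of strong concavity at a point of differentiability. -/
lemma aux_strong_first_order {H : Type*} [NormedAddCommGroup H] [InnerProductSpace ℝ H]
    [CompleteSpace H] {g : H → ℝ} {G : H → H} {μ : ℝ}
    (hg : ∀ y, HasGradientAt g (G y) y) (hc : StrongConcaveOn Set.univ μ g) (y y' : H) :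
    g y' + μ / 2 * ‖y' - y‖ ^ 2 ≤ g y + ⟪G y, y' - y⟫ := by
  set c : ℝ := μ / 2 * ‖y' - y‖ ^ 2 with hcdef
  set q : ℝ → ℝ := fun t => (g (y + t • (y' - y)) - g y) / t with hq
  have hderiv : HasDerivAt (fun t : ℝ => g (y + t • (y' - y))) ⟪G y, y' - y⟫ 0 := by
    have hcurve : HasDerivAt (fun t : ℝ => y + t • (y' - y)) (y' - y) 0 := by
      simpa using ((hasDerivAt_id (0:ℝ)).smul_const (y' - y)).const_add y
    have := ((hg (y + (0:ℝ) • (y' - y))).hasFDerivAt.comp_hasDerivAt 0 hcurve)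
    simpa [Function.comp_def] using this
  have htend : Tendsto q (nhdsWithin 0 (Set.Ioi 0)) (nhds ⟪G y, y' - y⟫) := by
    have := hderiv.hasDerivWithinAt (s := Set.Ioi (0:ℝ))
    rw [hasDerivWithinAt_iff_tendsto_slope] at this
    have hsub : nhdsWithin (0:ℝ) (Set.Ioi 0) ≤ nhdsWithin 0 (Set.Ioi 0 \ {0}) := by
      apply nhdsWithin_mono
      intro t ht
      exact ⟨ht, ne_of_gt ht⟩
    refine (this.mono_left hsub).congr fun t => ?_
    simp [slope_def_field, hq]
  have hineq : ∀ t : ℝ, t ∈ Set.Ioo (0:ℝ) 1 → g y' - g y + (1 - t) * c ≤ q t := by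
    intro t ht
    have h2 := hc.2 (Set.mem_univ y') (Set.mem_univ y) (le_of_lt ht.1)
      (by linarith [ht.2] : (0:ℝ) ≤ 1 - t) (by ring)
    have hpt : t • y' + (1 - t) • y = y + t • (y' - y) := by
      rw [smul_sub, sub_smul, one_smul]; abel
    rw [hpt] at h2
    show g y' - g y + (1 - t) * c ≤ (g (y + t • (y' - y)) - g y) / t
    rw [le_div_iff₀ ht.1]
    have h3 : t * g y' + (1 - t) * g y + t * (1 - t) * (μ / 2 * ‖y' - y‖ ^ 2) ≤
        g (y + t • (y' - y)) := by simpa [smul_eq_mul] using h2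
    rw [hcdef]
    nlinarith [h3]
  have hlim : g y' - g y + c ≤ ⟪G y, y' - y⟫ := by
    have h1 : Tendsto (fun t : ℝ => g y' - g y + (1 - t) * c) (nhdsWithin 0 (Set.Ioi 0))
        (nhds (g y' - g y + c)) := by
      have : Tendsto (fun t : ℝ => g y' - g y + (1 - t) * c) (nhds 0)
          (nhds (g y' - g y + (1 - 0) * c)) := by
        apply Tendsto.add tendsto_const_nhds
        exact (tendsto_const_nhds.sub tendsto_id).mul tendsto_const_nhds
      simpa using this.mono_left nhdsWithin_le_nhds
    refine le_of_tendsto_of_tendsto h1 htend ?_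
    filter_upwards [Ioo_mem_nhdsGT_of_mem (Set.mem_Ico.2 ⟨le_rfl, zero_lt_one⟩)] with t ht
    exact hineq t ht
  linarith

variable {E F : Type*} [NormedAddCommGroup E] [InnerProductSpace ℝ E] [CompleteSpace E]
    [NormedAddCommGroup F] [InnerProductSpace ℝ F] [CompleteSpace F]

lemma aux_fst_norm_le (z : WithLp 2 (E × F)) : ‖(WithLp.equiv 2 (E × F) z).1‖ ≤ ‖z‖ := by
  have h := WithLp.prod_norm_sq_eq_of_L2 z
  have h1 : ‖(WithLp.equiv 2 (E × F) z).1‖ = ‖z.fst‖ := rfl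
  nlinarith [norm_nonneg z.snd, norm_nonneg z.fst, norm_nonneg z]

lemma aux_snd_norm_le (z : WithLp 2 (E × F)) : ‖(WithLp.equiv 2 (E × F) z).2‖ ≤ ‖z‖ := by
  have h := WithLp.prod_norm_sq_eq_of_L2 z
  have h1 : ‖(WithLp.equiv 2 (E × F) z).2‖ = ‖z.snd‖ := rfl
  nlinarith [norm_nonneg z.snd, norm_nonneg z.fst, norm_nonneg z]

lemma aux_norm_le_add (z : WithLp 2 (E × F)) :
    ‖z‖ ≤ ‖(WithLp.equiv 2 (E × F) z).1‖ + ‖(WithLp.equiv 2 (E × F) z).2‖ := by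
  have h := WithLp.prod_norm_eq_of_L2 z
  rw [h]
  have : ‖z.fst‖ ^ 2 + ‖z.snd‖ ^ 2 ≤ (‖z.fst‖ + ‖z.snd‖) ^ 2 := by
    nlinarith [norm_nonneg z.fst, norm_nonneg z.snd]
  calc Real.sqrt (‖z.fst‖ ^ 2 + ‖z.snd‖ ^ 2) ≤ Real.sqrt ((‖z.fst‖ + ‖z.snd‖) ^ 2) :=
        Real.sqrt_le_sqrt this
    _ = ‖z.fst‖ + ‖z.snd‖ := by
        rw [Real.sqrt_sq (by positivity)]

lemma aux_partial_gradient (f : WithLp 2 (E × F) → ℝ) (x : E) (y : F)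
    (hd : DifferentiableAt ℝ f ((WithLp.equiv 2 (E × F)).symm (x, y))) :
    HasGradientAt (fun y' => f ((WithLp.equiv 2 (E × F)).symm (x, y')))
      ((WithLp.equiv 2 (E × F) (gradient f ((WithLp.equiv 2 (E × F)).symm (x, y)))).2) y := by
  set z := (WithLp.equiv 2 (E × F)).symm (x, y) with hz
  set L : F →L[ℝ] WithLp 2 (E × F) :=
    ((WithLp.prodContinuousLinearEquiv 2 ℝ E F).symm : (E × F) →L[ℝ] WithLp 2 (E × F)).comp
      (ContinuousLinearMap.inr ℝ E F) with hL
  have hc : HasFDerivAt (fun y' : F => (WithLp.equiv 2 (E × F)).symm (x, y')) L y := by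
    have heq : (fun y' : F => (WithLp.equiv 2 (E × F)).symm (x, y')) =
        fun y' => (WithLp.equiv 2 (E × F)).symm (x, 0) + L y' := by
      funext y'
      show (WithLp.equiv 2 (E × F)).symm (x, y') =
        (WithLp.equiv 2 (E × F)).symm (x, 0) + (WithLp.equiv 2 (E × F)).symm (0, y')
      rw [WithLp.equiv_symm_apply, ← WithLp.toLp_add]
      simp
    rw [heq]
    exact L.hasFDerivAt.const_add _
  have hg : HasFDerivAt f (toDual ℝ (WithLp 2 (E × F)) (gradient f z)) z :=
    hd.hasGradientAt.hasFDerivAt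
  have comp := hg.comp y hc
  have hEq : (toDual ℝ (WithLp 2 (E × F)) (gradient f z)).comp L =
      toDual ℝ F ((WithLp.equiv 2 (E × F) (gradient f z)).2) := by
    ext v
    show ⟪gradient f z, L v⟫ = ⟪(WithLp.equiv 2 (E × F) (gradient f z)).2, v⟫
    have hv : L v = (WithLp.equiv 2 (E × F)).symm (0, v) := rfl
    rw [hv, WithLp.prod_inner_apply]
    simp
  rw [hasGradientAt_iff_hasFDerivAt]
  rw [hEq] at comp
  exact comp

lemma stmt3_general [Nonempty F] (ℓ μ : ℝ) (hμ : 0 < μ) (hℓ : μ ≤ ℓ)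
    (f : WithLp 2 (E × F) → ℝ)
    (hdf : ∀ z, DifferentiableAt ℝ f z)
    (hlip : ∀ z z', ‖gradient f z - gradient f z'‖ ≤ ℓ * ‖z - z'‖)
    (hconc : ∀ x : E, StrongConcaveOn Set.univ μ (fun y : F => f ((WithLp.equiv 2 (E × F)).symm (x, y))))
    (P : E → ℝ)
    (hP : ∀ x : E, P x = ⨆ y : F, f ((WithLp.equiv 2 (E × F)).symm (x, y)))
    (ystar : E → F)
    (hstar : ∀ x : E, IsMaxOn (fun y : F => f ((WithLp.equiv 2 (E × F)).symm (x, y))) Set.univ (ystar x)) :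
    (∀ x : E, HasGradientAt P (((WithLp.equiv 2 (E × F)) (gradient f ((WithLp.equiv 2 (E × F)).symm (x, ystar x)))).1) x) ∧
    ∀ x x' : E, ‖((WithLp.equiv 2 (E × F)) (gradient f ((WithLp.equiv 2 (E × F)).symm (x, ystar x)))).1 -
        ((WithLp.equiv 2 (E × F)) (gradient f ((WithLp.equiv 2 (E × F)).symm (x', ystar x')))).1‖ ≤ (ℓ / μ + 1) * ℓ * ‖x - x'‖ := by
  have hℓ0 : 0 < ℓ := lt_of_lt_of_le hμ hℓ
  have hgrad : ∀ z, HasGradientAt f (gradient f z) z := fun z => (hdf z).hasGradientAt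
  have hpar : ∀ (x : E) (y : F), HasGradientAt (fun y' => f ((WithLp.equiv 2 (E × F)).symm (x, y')))
      (((WithLp.equiv 2 (E × F)) (gradient f ((WithLp.equiv 2 (E × F)).symm (x, y)))).2) y := fun x y => aux_partial_gradient f x y (hdf _)
  -- gradient in y vanishes at the maximizer
  have hzero : ∀ x : E, ((WithLp.equiv 2 (E × F)) (gradient f ((WithLp.equiv 2 (E × F)).symm (x, ystar x)))).2 = 0 := by
    intro x
    have hmax : IsLocalMax (fun y : F => f ((WithLp.equiv 2 (E × F)).symm (x, y))) (ystar x) :=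
      (hstar x).isLocalMax Filter.univ_mem
    have h0 := hmax.hasFDerivAt_eq_zero (hpar x (ystar x)).hasFDerivAt
    exact (LinearIsometryEquiv.map_eq_zero_iff _).1 h0
  -- difference of points with equal second (resp. first) coordinate
  have hsubx : ∀ (x x' : E) (y : F), (WithLp.equiv 2 (E × F)).symm (x, y) - (WithLp.equiv 2 (E × F)).symm (x', y) = (WithLp.equiv 2 (E × F)).symm (x - x', 0) := by
    intro x x' y
    rw [WithLp.equiv_symm_apply, ← WithLp.toLp_sub, Prod.mk_sub_mk, sub_self]
  have hnormx : ∀ (x x' : E) (y : F), ‖(WithLp.equiv 2 (E × F)).symm (x, y) - (WithLp.equiv 2 (E × F)).symm (x', y)‖ = ‖x - x'‖ := by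
    intro x x' y
    rw [hsubx, WithLp.equiv_symm_apply, WithLp.norm_toLp_fst]
  have hsuby : ∀ (x : E) (y y' : F), (WithLp.equiv 2 (E × F)).symm (x, y) - (WithLp.equiv 2 (E × F)).symm (x, y') = (WithLp.equiv 2 (E × F)).symm (0, y - y') := by
    intro x y y'
    rw [WithLp.equiv_symm_apply, ← WithLp.toLp_sub, Prod.mk_sub_mk, sub_self]
  have hnormy : ∀ (x : E) (y y' : F), ‖(WithLp.equiv 2 (E × F)).symm (x, y) - (WithLp.equiv 2 (E × F)).symm (x, y')‖ = ‖y - y'‖ := by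
    intro x y y'
    rw [hsuby, WithLp.equiv_symm_apply, WithLp.norm_toLp_snd]
  -- components of differences
  have hfstsub : ∀ a b : WithLp 2 (E × F), ((WithLp.equiv 2 (E × F)) a).1 - ((WithLp.equiv 2 (E × F)) b).1 = ((WithLp.equiv 2 (E × F)) (a - b)).1 :=
    fun a b => rfl
  have hsndsub : ∀ a b : WithLp 2 (E × F), ((WithLp.equiv 2 (E × F)) a).2 - ((WithLp.equiv 2 (E × F)) b).2 = ((WithLp.equiv 2 (E × F)) (a - b)).2 :=
    fun a b => rfl
  -- Lipschitz continuity of ystar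
  have hkey : ∀ x x' : E, μ * ‖ystar x - ystar x'‖ ≤ ℓ * ‖x - x'‖ := by
    intro x x'
    have hcross : ‖((WithLp.equiv 2 (E × F)) (gradient f ((WithLp.equiv 2 (E × F)).symm (x, ystar x')))).2‖ ≤ ℓ * ‖x - x'‖ := by
      calc ‖((WithLp.equiv 2 (E × F)) (gradient f ((WithLp.equiv 2 (E × F)).symm (x, ystar x')))).2‖
          = ‖((WithLp.equiv 2 (E × F)) (gradient f ((WithLp.equiv 2 (E × F)).symm (x, ystar x')))).2 -
              ((WithLp.equiv 2 (E × F)) (gradient f ((WithLp.equiv 2 (E × F)).symm (x', ystar x')))).2‖ := by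
            rw [hzero x', sub_zero]
        _ = ‖((WithLp.equiv 2 (E × F)) (gradient f ((WithLp.equiv 2 (E × F)).symm (x, ystar x')) -
              gradient f ((WithLp.equiv 2 (E × F)).symm (x', ystar x')))).2‖ := by
            rw [hsndsub]
        _ ≤ ‖gradient f ((WithLp.equiv 2 (E × F)).symm (x, ystar x')) - gradient f ((WithLp.equiv 2 (E × F)).symm (x', ystar x'))‖ :=
            aux_snd_norm_le _
        _ ≤ ℓ * ‖(WithLp.equiv 2 (E × F)).symm (x, ystar x') - (WithLp.equiv 2 (E × F)).symm (x', ystar x')‖ := hlip _ _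
        _ = ℓ * ‖x - x'‖ := by rw [hnormx]
    have hA := aux_strong_first_order (hpar x) (hconc x) (ystar x) (ystar x')
    have hB := aux_strong_first_order (hpar x) (hconc x) (ystar x') (ystar x)
    rw [hzero x, inner_zero_left] at hA
    have hCS : ⟪((WithLp.equiv 2 (E × F)) (gradient f ((WithLp.equiv 2 (E × F)).symm (x, ystar x')))).2, ystar x - ystar x'⟫ ≤
        ‖((WithLp.equiv 2 (E × F)) (gradient f ((WithLp.equiv 2 (E × F)).symm (x, ystar x')))).2‖ * ‖ystar x - ystar x'‖ :=
      real_inner_le_norm _ _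
    have hnrev : ‖ystar x' - ystar x‖ = ‖ystar x - ystar x'‖ := norm_sub_rev _ _
    rw [hnrev] at hA
    by_cases hΔ : ‖ystar x - ystar x'‖ = 0
    · rw [hΔ, mul_zero]; positivity
    · have hΔpos : 0 < ‖ystar x - ystar x'‖ := lt_of_le_of_ne (norm_nonneg _) (Ne.symm hΔ)
      nlinarith [hA, hB, hCS, hcross,
        mul_le_mul_of_nonneg_right hcross (norm_nonneg (ystar x - ystar x'))]
  have hy_lip : ∀ x x' : E, ‖ystar x - ystar x'‖ ≤ ℓ / μ * ‖x - x'‖ := by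
    intro x x'
    rw [div_mul_eq_mul_div, le_div_iff₀ hμ]
    nlinarith [hkey x x']
  -- the second conclusion
  have hgoal2 : ∀ x x' : E,
      ‖((WithLp.equiv 2 (E × F)) (gradient f ((WithLp.equiv 2 (E × F)).symm (x, ystar x)))).1 -
        ((WithLp.equiv 2 (E × F)) (gradient f ((WithLp.equiv 2 (E × F)).symm (x', ystar x')))).1‖ ≤ (ℓ / μ + 1) * ℓ * ‖x - x'‖ := by
    intro x x'
    have h1 : ‖((WithLp.equiv 2 (E × F)) (gradient f ((WithLp.equiv 2 (E × F)).symm (x, ystar x)))).1 -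
        ((WithLp.equiv 2 (E × F)) (gradient f ((WithLp.equiv 2 (E × F)).symm (x', ystar x')))).1‖ ≤
        ‖gradient f ((WithLp.equiv 2 (E × F)).symm (x, ystar x)) - gradient f ((WithLp.equiv 2 (E × F)).symm (x', ystar x'))‖ := by
      rw [hfstsub]; exact aux_fst_norm_le _
    have h2 : ‖gradient f ((WithLp.equiv 2 (E × F)).symm (x, ystar x)) - gradient f ((WithLp.equiv 2 (E × F)).symm (x', ystar x'))‖ ≤
        ℓ * ‖(WithLp.equiv 2 (E × F)).symm (x, ystar x) - (WithLp.equiv 2 (E × F)).symm (x', ystar x')‖ := hlip _ _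
    have h3 : ‖(WithLp.equiv 2 (E × F)).symm (x, ystar x) - (WithLp.equiv 2 (E × F)).symm (x', ystar x')‖ ≤
        ‖x - x'‖ + ‖ystar x - ystar x'‖ := by
      have h4 := aux_norm_le_add ((WithLp.equiv 2 (E × F)).symm (x, ystar x) - (WithLp.equiv 2 (E × F)).symm (x', ystar x'))
      rw [← hfstsub, ← hsndsub] at h4
      simpa using h4
    have h4 := hy_lip x x'
    have h5 : 0 ≤ ‖x - x'‖ := norm_nonneg _
    calc ‖((WithLp.equiv 2 (E × F)) (gradient f ((WithLp.equiv 2 (E × F)).symm (x, ystar x)))).1 -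
        ((WithLp.equiv 2 (E × F)) (gradient f ((WithLp.equiv 2 (E × F)).symm (x', ystar x')))).1‖
        ≤ ℓ * ‖(WithLp.equiv 2 (E × F)).symm (x, ystar x) - (WithLp.equiv 2 (E × F)).symm (x', ystar x')‖ := h1.trans h2
      _ ≤ ℓ * (‖x - x'‖ + ‖ystar x - ystar x'‖) := by nlinarith
      _ ≤ (ℓ / μ + 1) * ℓ * ‖x - x'‖ := by nlinarith
  -- value of P at the maximizer
  have hBdd : ∀ x : E, BddAbove (Set.range fun y : F => f ((WithLp.equiv 2 (E × F)).symm (x, y))) := by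
    intro x
    exact ⟨f ((WithLp.equiv 2 (E × F)).symm (x, ystar x)), by rintro v ⟨y, rfl⟩; exact hstar x (Set.mem_univ y)⟩
  have hPval : ∀ x : E, P x = f ((WithLp.equiv 2 (E × F)).symm (x, ystar x)) := by
    intro x
    rw [hP x]
    exact le_antisymm (ciSup_le fun y => hstar x (Set.mem_univ y)) (le_ciSup (hBdd x) (ystar x))
  have hPge : ∀ (x x' : E), f ((WithLp.equiv 2 (E × F)).symm (x', ystar x)) ≤ P x' := by
    intro x x'
    rw [hP x']
    exact le_ciSup (hBdd x') (ystar x)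
  -- inner product identity
  have hinner : ∀ (z : WithLp 2 (E × F)) (v : E),
      ⟪z, (WithLp.equiv 2 (E × F)).symm (v, 0)⟫ = ⟪((WithLp.equiv 2 (E × F)) z).1, v⟫ := by
    intro z v
    rw [WithLp.prod_inner_apply]
    simp
  have hdesc := aux_descent (le_of_lt hℓ0) hgrad hlip
  -- quadratic bound for the linearization error of P
  have hquad : ∀ x x' : E,
      |P x' - P x - ⟪((WithLp.equiv 2 (E × F)) (gradient f ((WithLp.equiv 2 (E × F)).symm (x, ystar x)))).1, x' - x⟫| ≤
        (ℓ + ℓ * (ℓ / μ)) * ‖x' - x‖ ^ 2 := by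
    intro x x'
    rw [abs_le]
    constructor
    · -- lower bound: compare with f(·, ystar x)
      have hl := hdesc ((WithLp.equiv 2 (E × F)).symm (x, ystar x)) ((WithLp.equiv 2 (E × F)).symm (x', ystar x))
      rw [hsubx x' x (ystar x), hinner, (by rw [WithLp.equiv_symm_apply]; exact WithLp.norm_toLp_fst 2 E F _ : ‖(WithLp.equiv 2 (E × F)).symm (x' - x, (0:F))‖ = ‖x' - x‖)] at hl
      have hl' := (abs_le.1 hl).1
      have hup : f ((WithLp.equiv 2 (E × F)).symm (x', ystar x)) ≤ P x' := hPge x x'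
      have hEq : P x = f ((WithLp.equiv 2 (E × F)).symm (x, ystar x)) := hPval x
      have h5 : ‖x' - x‖ ^ 2 ≥ 0 := by positivity
      have h6 : 0 < ℓ / μ := by positivity
      nlinarith [hl', hup, mul_nonneg (mul_nonneg hℓ0.le h6.le) h5]
    · -- upper bound: compare with f(·, ystar x')
      have hl := hdesc ((WithLp.equiv 2 (E × F)).symm (x, ystar x')) ((WithLp.equiv 2 (E × F)).symm (x', ystar x'))
      rw [hsubx x' x (ystar x'), hinner, (by rw [WithLp.equiv_symm_apply]; exact WithLp.norm_toLp_fst 2 E F _ : ‖(WithLp.equiv 2 (E × F)).symm (x' - x, (0:F))‖ = ‖x' - x‖)] at hl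
      have hl' := (abs_le.1 hl).2
      have hup : f ((WithLp.equiv 2 (E × F)).symm (x, ystar x')) ≤ P x := hPge x' x
      have hEq : P x' = f ((WithLp.equiv 2 (E × F)).symm (x', ystar x')) := hPval x'
      have hgdiff : ‖((WithLp.equiv 2 (E × F)) (gradient f ((WithLp.equiv 2 (E × F)).symm (x, ystar x')))).1 -
          ((WithLp.equiv 2 (E × F)) (gradient f ((WithLp.equiv 2 (E × F)).symm (x, ystar x)))).1‖ ≤ ℓ * (ℓ / μ) * ‖x' - x‖ := by
        calc ‖((WithLp.equiv 2 (E × F)) (gradient f ((WithLp.equiv 2 (E × F)).symm (x, ystar x')))).1 -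
            ((WithLp.equiv 2 (E × F)) (gradient f ((WithLp.equiv 2 (E × F)).symm (x, ystar x)))).1‖
            = ‖((WithLp.equiv 2 (E × F)) (gradient f ((WithLp.equiv 2 (E × F)).symm (x, ystar x')) -
                gradient f ((WithLp.equiv 2 (E × F)).symm (x, ystar x)))).1‖ := by rw [hfstsub]
          _ ≤ ‖gradient f ((WithLp.equiv 2 (E × F)).symm (x, ystar x')) - gradient f ((WithLp.equiv 2 (E × F)).symm (x, ystar x))‖ :=
              aux_fst_norm_le _
          _ ≤ ℓ * ‖(WithLp.equiv 2 (E × F)).symm (x, ystar x') - (WithLp.equiv 2 (E × F)).symm (x, ystar x)‖ := hlip _ _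
          _ = ℓ * ‖ystar x' - ystar x‖ := by rw [hnormy]
          _ ≤ ℓ * (ℓ / μ * ‖x' - x‖) := by
              have := hy_lip x' x
              nlinarith
          _ = ℓ * (ℓ / μ) * ‖x' - x‖ := by ring
      have hinner_diff : ⟪((WithLp.equiv 2 (E × F)) (gradient f ((WithLp.equiv 2 (E × F)).symm (x, ystar x')))).1 -
            ((WithLp.equiv 2 (E × F)) (gradient f ((WithLp.equiv 2 (E × F)).symm (x, ystar x)))).1, x' - x⟫ ≤
          ℓ * (ℓ / μ) * ‖x' - x‖ * ‖x' - x‖ := by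
        refine (real_inner_le_norm _ _).trans ?_
        have := norm_nonneg (x' - x)
        nlinarith
      have hsplit : ⟪((WithLp.equiv 2 (E × F)) (gradient f ((WithLp.equiv 2 (E × F)).symm (x, ystar x')))).1, x' - x⟫ =
          ⟪((WithLp.equiv 2 (E × F)) (gradient f ((WithLp.equiv 2 (E × F)).symm (x, ystar x')))).1 -
            ((WithLp.equiv 2 (E × F)) (gradient f ((WithLp.equiv 2 (E × F)).symm (x, ystar x)))).1, x' - x⟫ +
          ⟪((WithLp.equiv 2 (E × F)) (gradient f ((WithLp.equiv 2 (E × F)).symm (x, ystar x)))).1, x' - x⟫ := by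
        rw [inner_sub_left]; ring
      have h7 : ‖x' - x‖ = ‖x' - x‖ := rfl
      nlinarith [hl', hup, hinner_diff, sq_nonneg ‖x' - x‖]
  -- the first conclusion
  have hgoal1 : ∀ x : E, HasGradientAt P (((WithLp.equiv 2 (E × F)) (gradient f ((WithLp.equiv 2 (E × F)).symm (x, ystar x)))).1) x := by
    intro x
    rw [hasGradientAt_iff_isLittleO]
    have hbig : (fun x' => P x' - P x - ⟪((WithLp.equiv 2 (E × F)) (gradient f ((WithLp.equiv 2 (E × F)).symm (x, ystar x)))).1, x' - x⟫)
        =O[nhds x] fun x' => ‖x' - x‖ * ‖x' - x‖ := by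
      refine Asymptotics.IsBigO.of_bound (ℓ + ℓ * (ℓ / μ)) ?_
      refine Filter.Eventually.of_forall fun x' => ?_
      have h1 := hquad x x'
      rw [Real.norm_eq_abs]
      have h2 : ‖‖x' - x‖ * ‖x' - x‖‖ = ‖x' - x‖ ^ 2 := by
        rw [Real.norm_eq_abs, abs_of_nonneg (by positivity), sq]
      rw [h2]
      exact h1
    have hsmall : (fun x' : E => ‖x' - x‖ * ‖x' - x‖) =o[nhds x] fun x' => x' - x := by
      have h1 : (fun x' : E => ‖x' - x‖) =o[nhds x] (fun _ => (1 : ℝ)) := by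
        rw [Asymptotics.isLittleO_one_iff]
        exact (continuous_id.sub continuous_const).norm.tendsto' x _ (by simp)
      have h2 : (fun x' : E => ‖x' - x‖) =O[nhds x] fun x' => ‖x' - x‖ :=
        Asymptotics.isBigO_refl _ _
      have h3 := h1.mul_isBigO h2
      simp only [one_mul] at h3
      exact h3.of_norm_right
    exact hbig.trans_isLittleO hsmall
  exact ⟨hgoal1, hgoal2⟩

end stmt3aux

theorem stmt3 {n m : ℕ} (ℓ μ : ℝ) (hμ : 0 < μ) (hℓ : μ ≤ ℓ)
    (f : WithLp 2 (EuclideanSpace ℝ (Fin n) × EuclideanSpace ℝ (Fin m)) → ℝ)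
    (hdiff : ContDiff ℝ 2 f)
    (hlip : ∀ z z', ‖gradient f z - gradient f z'‖ ≤ ℓ * ‖z - z'‖)
    (hconc : ∀ x, StrongConcaveOn Set.univ μ
      (fun y => f ((WithLp.equiv 2 (EuclideanSpace ℝ (Fin n) × EuclideanSpace ℝ (Fin m))).symm (x, y))))
    (P : EuclideanSpace ℝ (Fin n) → ℝ)
    (hP : ∀ x, P x = ⨆ y, f ((WithLp.equiv 2 (EuclideanSpace ℝ (Fin n) × EuclideanSpace ℝ (Fin m))).symm (x, y)))
    (ystar : EuclideanSpace ℝ (Fin n) → EuclideanSpace ℝ (Fin m))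
    (hstar : ∀ x, IsMaxOn
      (fun y => f ((WithLp.equiv 2 (EuclideanSpace ℝ (Fin n) × EuclideanSpace ℝ (Fin m))).symm (x, y)))
      Set.univ (ystar x)) :
    (∀ x, HasGradientAt P
      ((WithLp.equiv 2 (EuclideanSpace ℝ (Fin n) × EuclideanSpace ℝ (Fin m)))
        (gradient f ((WithLp.equiv 2 (EuclideanSpace ℝ (Fin n) × EuclideanSpace ℝ (Fin m))).symm
          (x, ystar x)))).1 x) ∧
    ∀ x x',
      ‖((WithLp.equiv 2 (EuclideanSpace ℝ (Fin n) × EuclideanSpace ℝ (Fin m)))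
          (gradient f ((WithLp.equiv 2 (EuclideanSpace ℝ (Fin n) × EuclideanSpace ℝ (Fin m))).symm
            (x, ystar x)))).1 -
        ((WithLp.equiv 2 (EuclideanSpace ℝ (Fin n) × EuclideanSpace ℝ (Fin m)))
          (gradient f ((WithLp.equiv 2 (EuclideanSpace ℝ (Fin n) × EuclideanSpace ℝ (Fin m))).symm
            (x', ystar x')))).1‖ ≤ (ℓ / μ + 1) * ℓ * ‖x - x'‖ :=
  stmt3_general ℓ μ hμ hℓ f (fun z => (hdiff.differentiable (by norm_num)) z) hlip hconc P hP
    ystar hstar
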